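/- Fix m ≥ 2, k with 1 ≤ k ≤ m−1, and set l = C(m−1, k−1). Let (c_n)_{n∈ℕ} be a sequence of natural numbers with c_n/n → 0. Define f(N) = Σ_{i=0}^{k} (−1)^i · C(N·(k−i) + m − 1, m − 1) for N ∈ ℕ. Then lim_{n→∞} f(n − l·c_n) / f(n) = 1 (the subtraction n − l·c_n is eventually nonnegative since c_n = o(n)). -/

import Mathlib

/-- The claimed number of `k`-approval scoring profiles with `N` voters and `m` candidates. -/
def kApprovalScoringCount (m k N : ℕ) : ℤ :=
  ∑ i ∈ Finset.range (k + 1),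
    (-1 : ℤ) ^ i * (Nat.choose (N * (k - i) + m - 1) (m - 1) : ℤ)

open Filter Finset

private lemma cast_choose_add (b r : ℕ) :
    ((b + r).choose r : ℝ) = (∏ j ∈ Finset.range r, ((b : ℝ) + ((r - j : ℕ) : ℝ))) / (Nat.factorial r) := by
  have h1 : (b + r).descFactorial r = (Nat.factorial r) * (b + r).choose r :=
    Nat.descFactorial_eq_factorial_mul_choose _ _
  have h2 : (b + r).descFactorial r = ∏ j ∈ Finset.range r, (b + (r - j)) := by
    rw [Nat.descFactorial_eq_prod_range]
    refine Finset.prod_congr rfl fun j hj => ?_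
    have : j < r := Finset.mem_range.mp hj
    omega
  have h3 : ((b + r).descFactorial r : ℝ)
      = ∏ j ∈ Finset.range r, ((b : ℝ) + ((r - j : ℕ) : ℝ)) := by
    rw [h2]; push_cast; ring_nf
  rw [h1] at h3
  push_cast at h3
  field_simp
  linarith [h3]

private lemma tendsto_choose_div_pow (r : ℕ) (b : ℕ → ℕ) (s : ℝ)
    (hb : Filter.Tendsto (fun n : ℕ => (b n : ℝ) / n) Filter.atTop (nhds s)) :
    Filter.Tendsto (fun n : ℕ => ((b n + r).choose r : ℝ) / (n : ℝ) ^ r) Filter.atTop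
      (nhds (s ^ r / (Nat.factorial r))) := by
  have heq : ∀ n : ℕ, ((b n + r).choose r : ℝ) / (n : ℝ) ^ r
      = (∏ j ∈ Finset.range r, (((b n : ℝ) + ((r - j : ℕ) : ℝ)) / n)) / (Nat.factorial r) := by
    intro n
    rw [cast_choose_add, Finset.prod_div_distrib, Finset.prod_const, Finset.card_range]
    rw [div_div, div_div, mul_comm (((Nat.factorial r) : ℝ)) _]
  simp only [heq]
  have hterm : ∀ j : ℕ, Filter.Tendsto (fun n : ℕ => ((b n : ℝ) + ((r - j : ℕ) : ℝ)) / n)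
      Filter.atTop (nhds s) := by
    intro j
    have h0 : Filter.Tendsto (fun n : ℕ => (((r - j : ℕ) : ℝ)) / n) Filter.atTop (nhds 0) :=
      tendsto_const_div_atTop_nhds_zero_nat _
    have := hb.add h0
    simp only [add_zero] at this
    refine this.congr fun n => ?_
    rw [← add_div]
  have hprod : Filter.Tendsto (fun n : ℕ => ∏ j ∈ Finset.range r,
      (((b n : ℝ) + ((r - j : ℕ) : ℝ)) / n)) Filter.atTop (nhds (s ^ r)) := by
    have := tendsto_finset_prod (f := fun (j : ℕ) (n : ℕ) => ((b n : ℝ) + ((r - j : ℕ) : ℝ)) / n)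
      (a := fun _ => s) (Finset.range r) (fun j _ => hterm j)
    simpa [Finset.prod_const, Finset.card_range] using this
  exact hprod.div_const _

private lemma tendsto_count_div_pow (m k : ℕ) (hm : 2 ≤ m) (b : ℕ → ℕ) (s : ℝ)
    (hb : Filter.Tendsto (fun n : ℕ => (b n : ℝ) / n) Filter.atTop (nhds s)) :
    Filter.Tendsto (fun n : ℕ => (kApprovalScoringCount m k (b n) : ℝ) / (n : ℝ) ^ (m - 1))
      Filter.atTop
      (nhds (∑ i ∈ Finset.range (k + 1),
        (-1 : ℝ) ^ i * ((((k - i : ℕ) : ℝ) * s) ^ (m - 1) / (Nat.factorial (m-1))))) := by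
  have heq : ∀ n : ℕ, (kApprovalScoringCount m k (b n) : ℝ) / (n : ℝ) ^ (m - 1)
      = ∑ i ∈ Finset.range (k + 1),
        (-1 : ℝ) ^ i * (((b n * (k - i) + (m - 1)).choose (m - 1) : ℝ) / (n : ℝ) ^ (m - 1)) := by
    intro n
    have harg : ∀ i : ℕ, b n * (k - i) + m - 1 = b n * (k - i) + (m - 1) := by
      intro i; omega
    unfold kApprovalScoringCount
    push_cast
    rw [Finset.sum_div]
    refine Finset.sum_congr rfl fun i _ => ?_
    rw [harg i, mul_div_assoc]
  simp only [heq]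
  refine tendsto_finset_sum _ fun i _ => ?_
  have hbi : Filter.Tendsto (fun n : ℕ => ((b n * (k - i) : ℕ) : ℝ) / n) Filter.atTop
      (nhds (s * ((k - i : ℕ) : ℝ))) := by
    have := hb.mul_const (((k - i : ℕ) : ℝ))
    refine this.congr fun n => ?_
    push_cast
    ring
  have := (tendsto_choose_div_pow (m - 1) (fun n => b n * (k - i)) _ hbi).const_mul
    ((-1 : ℝ) ^ i)
  convert this using 2
  rw [mul_comm s]

private lemma alt_sum_bounds (r : ℕ) (hr : 1 ≤ r) : ∀ k : ℕ,
    0 ≤ (∑ j ∈ Finset.range (k + 1), (-1 : ℝ) ^ (k - j) * (j : ℝ) ^ r) ∧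
      (∑ j ∈ Finset.range (k + 1), (-1 : ℝ) ^ (k - j) * (j : ℝ) ^ r) ≤ (k : ℝ) ^ r := by
  intro k
  induction k with
  | zero => simp [zero_pow (by omega : r ≠ 0)]
  | succ k ih =>
    have hstep : (∑ j ∈ Finset.range (k + 1 + 1), (-1 : ℝ) ^ (k + 1 - j) * (j : ℝ) ^ r)
        = ((k + 1 : ℕ) : ℝ) ^ r
          - ∑ j ∈ Finset.range (k + 1), (-1 : ℝ) ^ (k - j) * (j : ℝ) ^ r := by
      rw [Finset.sum_range_succ]
      have h1 : (-1 : ℝ) ^ (k + 1 - (k + 1)) = 1 := by norm_num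
      have h2 : ∀ j ∈ Finset.range (k + 1),
          (-1 : ℝ) ^ (k + 1 - j) * (j : ℝ) ^ r = -((-1 : ℝ) ^ (k - j) * (j : ℝ) ^ r) := by
        intro j hj
        have hjk : j ≤ k := by have := Finset.mem_range.mp hj; omega
        have : k + 1 - j = (k - j) + 1 := by omega
        rw [this, pow_succ]
        ring
      rw [Finset.sum_congr rfl h2, Finset.sum_neg_distrib, Nat.sub_self, pow_zero, one_mul]
      push_cast
      ring
    constructor
    · rw [hstep]
      have hle : ((k : ℕ) : ℝ) ^ r ≤ ((k + 1 : ℕ) : ℝ) ^ r := by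
        apply pow_le_pow_left₀ (by positivity)
        push_cast; linarith
      linarith [ih.2]
    · rw [hstep]
      linarith [ih.1]

private lemma alt_sum_pos (r : ℕ) (hr : 1 ≤ r) (k : ℕ) (hk : 1 ≤ k) :
    0 < ∑ j ∈ Finset.range (k + 1), (-1 : ℝ) ^ (k - j) * (j : ℝ) ^ r := by
  obtain ⟨k', rfl⟩ : ∃ k', k = k' + 1 := ⟨k - 1, by omega⟩
  have hstep : (∑ j ∈ Finset.range (k' + 1 + 1), (-1 : ℝ) ^ (k' + 1 - j) * (j : ℝ) ^ r)
      = ((k' + 1 : ℕ) : ℝ) ^ r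
        - ∑ j ∈ Finset.range (k' + 1), (-1 : ℝ) ^ (k' - j) * (j : ℝ) ^ r := by
    rw [Finset.sum_range_succ]
    have h2 : ∀ j ∈ Finset.range (k' + 1),
        (-1 : ℝ) ^ (k' + 1 - j) * (j : ℝ) ^ r = -((-1 : ℝ) ^ (k' - j) * (j : ℝ) ^ r) := by
      intro j hj
      have hjk : j ≤ k' := by have := Finset.mem_range.mp hj; omega
      have : k' + 1 - j = (k' - j) + 1 := by omega
      rw [this, pow_succ]
      ring
    rw [Finset.sum_congr rfl h2, Finset.sum_neg_distrib, Nat.sub_self, pow_zero, one_mul]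
    push_cast
    ring
  rw [hstep]
  have hlt : ((k' : ℕ) : ℝ) ^ r < ((k' + 1 : ℕ) : ℝ) ^ r := by
    apply pow_lt_pow_left₀ _ (by positivity) (by omega)
    push_cast; linarith
  linarith [(alt_sum_bounds r hr k').2]

private lemma reflect_sum (r k : ℕ) :
    (∑ i ∈ Finset.range (k + 1), (-1 : ℝ) ^ i * ((k - i : ℕ) : ℝ) ^ r)
      = ∑ j ∈ Finset.range (k + 1), (-1 : ℝ) ^ (k - j) * (j : ℝ) ^ r := by
  rw [← Finset.sum_range_reflect (fun j => (-1 : ℝ) ^ (k - j) * (j : ℝ) ^ r) (k + 1)]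
  refine Finset.sum_congr rfl fun i hi => ?_
  have hik : i ≤ k := by have := Finset.mem_range.mp hi; omega
  have h1 : k + 1 - 1 - i = k - i := by omega
  have h2 : k - (k - i) = i := by omega
  rw [h1, h2]

/-- Fix `m ≥ 2`, `1 ≤ k ≤ m - 1`, `l = C(m-1, k-1)`, and a sequence `c_n` with
`c_n / n → 0`. Then `f(n - l·c_n)/f(n) → 1` where
`f(N) = Σ_{i=0}^{k} (-1)^i C(N(k-i)+m-1, m-1)`. -/
theorem kapproval_isc_collusion_ratio_tendsto_one (m k : ℕ) (hm : 2 ≤ m)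
    (hk1 : 1 ≤ k) (hk2 : k ≤ m - 1) (c : ℕ → ℕ)
    (hc : Filter.Tendsto (fun n : ℕ => (c n : ℝ) / (n : ℝ)) Filter.atTop (nhds 0)) :
    Filter.Tendsto
      (fun n : ℕ =>
        ((kApprovalScoringCount m k (n - Nat.choose (m - 1) (k - 1) * c n) : ℝ)) /
          ((kApprovalScoringCount m k n : ℝ)))
      Filter.atTop (nhds 1) := by
  set l := Nat.choose (m - 1) (k - 1) with hl
  set r := m - 1 with hr
  have hr1 : 1 ≤ r := by omega
  -- the common limit value (at s = 1)
  set L : ℝ := ∑ i ∈ Finset.range (k + 1),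
    (-1 : ℝ) ^ i * ((((k - i : ℕ) : ℝ) * 1) ^ r / (Nat.factorial r)) with hL
  have hLpos : 0 < L := by
    have hfac : (0 : ℝ) < (Nat.factorial r) := by positivity
    have : L = (∑ i ∈ Finset.range (k + 1), (-1 : ℝ) ^ i * ((k - i : ℕ) : ℝ) ^ r) / (Nat.factorial r) := by
      rw [hL, Finset.sum_div]
      refine Finset.sum_congr rfl fun i _ => ?_
      rw [mul_one, mul_div_assoc]
    rw [this, reflect_sum]
    exact div_pos (alt_sum_pos r hr1 k hk1) hfac
  -- denominator limit
  have hden : Filter.Tendsto (fun n : ℕ => (kApprovalScoringCount m k n : ℝ) / (n : ℝ) ^ r)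
      Filter.atTop (nhds L) := by
    apply tendsto_count_div_pow m k hm id 1
    have : (fun n : ℕ => ((id n : ℕ) : ℝ) / (n : ℝ)) =ᶠ[Filter.atTop] (fun _ => (1 : ℝ)) := by
      filter_upwards [Filter.eventually_gt_atTop 0] with n hn
      field_simp
      rfl
    exact Filter.Tendsto.congr' this.symm tendsto_const_nhds
  -- numerator limit
  have hlc : Filter.Tendsto (fun n : ℕ => ((l * c n : ℕ) : ℝ) / n) Filter.atTop (nhds 0) := by
    have := hc.const_mul ((l : ℕ) : ℝ)
    simp only [mul_zero] at this
    refine this.congr fun n => ?_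
    push_cast
    ring
  have hnum : Filter.Tendsto
      (fun n : ℕ => (kApprovalScoringCount m k (n - l * c n) : ℝ) / (n : ℝ) ^ r)
      Filter.atTop (nhds L) := by
    apply tendsto_count_div_pow m k hm (fun n => n - l * c n) 1
    have hev : (fun n : ℕ => (((n - l * c n : ℕ)) : ℝ) / n) =ᶠ[Filter.atTop]
        (fun n : ℕ => 1 - ((l * c n : ℕ) : ℝ) / n) := by
      have h1 : ∀ᶠ n : ℕ in Filter.atTop, ((l * c n : ℕ) : ℝ) / n < 1 :=
        hlc.eventually_lt_const one_pos
      filter_upwards [h1, Filter.eventually_gt_atTop 0] with n hn hn0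
      have hle : l * c n ≤ n := by
        by_contra hcon
        push_neg at hcon
        have : (1 : ℝ) < ((l * c n : ℕ) : ℝ) / n := by
          rw [lt_div_iff₀ (by positivity), one_mul]
          exact_mod_cast hcon
        linarith
      have : (((n - l * c n : ℕ)) : ℝ) = (n : ℝ) - ((l * c n : ℕ) : ℝ) := by
        push_cast [Nat.cast_sub hle]
        ring
      rw [this, sub_div]
      congr 1
      field_simp
    have : Filter.Tendsto (fun n : ℕ => 1 - ((l * c n : ℕ) : ℝ) / n) Filter.atTop
        (nhds (1 - 0)) := tendsto_const_nhds.sub hlc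
    simp only [sub_zero] at this
    exact Filter.Tendsto.congr' hev.symm this
  -- combine
  have hratio : Filter.Tendsto
      (fun n : ℕ => ((kApprovalScoringCount m k (n - l * c n) : ℝ) / (n : ℝ) ^ r) /
        ((kApprovalScoringCount m k n : ℝ) / (n : ℝ) ^ r))
      Filter.atTop (nhds (L / L)) := hnum.div hden (ne_of_gt hLpos)
  rw [div_self (ne_of_gt hLpos)] at hratio
  refine Filter.Tendsto.congr' ?_ hratio
  filter_upwards [Filter.eventually_gt_atTop 0] with n hn
  have hne : ((n : ℝ) ^ r) ≠ 0 := by positivity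
  rw [div_div_div_cancel_right₀ hne]
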